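/- Let G be a graph and suppose every induced subgraph of G on at most 4t vertices has average degree less than 3. Then for every vertex subset S of G with |S| = t, the closure F(S) — obtained from S by repeatedly adding vertices outside the current set that have at least two neighbors inside it, until no such vertex remains — satisfies |F(S)| ≤ 4t. -/

import Mathlib

/-- The closure `F(S)` of a vertex set `S`: the (unique) minimal superset `T` of `S` such that
no vertex outside `T` has at least two neighbors in `T`. It is obtained from `S` by repeatedly
adding vertices with at least two neighbors in the current set. -/
def closureF {V : Type*} (G : SimpleGraph V) (S : Set V) : Set V :=
  ⋂₀ {T : Set V | S ⊆ T ∧ ∀ v ∉ T, {u : V | u ∈ T ∧ G.Adj v u}.ncard ≤ 1}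

theorem stmt_16 {V : Type*} [Fintype V] (G : SimpleGraph V) (t : ℕ)
    (havg : ∀ s : Finset V, s.Nonempty → s.card ≤ 4 * t →
      2 * {e : Sym2 V | e ∈ G.edgeSet ∧ ∀ v ∈ e, v ∈ s}.ncard < 3 * s.card)
    (S : Finset V) (hS : S.card = t) :
    (closureF G (S : Set V)).ncard ≤ 4 * t := by
  classical
  set ed : Finset V → ℕ := fun T => (G.edgeFinset.filter (fun e => ∀ v ∈ e, v ∈ T)).card with hed
  have hedset : ∀ T : Finset V,
      {e : Sym2 V | e ∈ G.edgeSet ∧ ∀ v ∈ e, v ∈ T}.ncard = ed T := by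
    intro T
    have : {e : Sym2 V | e ∈ G.edgeSet ∧ ∀ v ∈ e, v ∈ T}
        = ↑(G.edgeFinset.filter (fun e => ∀ v ∈ e, v ∈ T)) := by
      ext e
      simp [SimpleGraph.mem_edgeFinset]
    rw [this, Set.ncard_coe_finset]
  -- family of invariant sets
  set 𝒯 : Finset (Finset V) :=
    Finset.univ.filter (fun T => S ⊆ T ∧ T.card ≤ 4 * t ∧ 2 * T.card ≤ 2 * t + ed T) with h𝒯
  have hSmem : S ∈ 𝒯 := by
    simp only [h𝒯, Finset.mem_filter, Finset.mem_univ, true_and]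
    exact ⟨Finset.Subset.refl S, by omega, by omega⟩
  obtain ⟨T, hT𝒯, hTmax⟩ := Finset.exists_max_image 𝒯 (fun T => T.card) ⟨S, hSmem⟩
  simp only [h𝒯, Finset.mem_filter, Finset.mem_univ, true_and] at hT𝒯
  obtain ⟨hST, hTcard, hTinv⟩ := hT𝒯
  -- T is closed
  have hclosed : ∀ v ∉ (T : Set V), {u : V | u ∈ (T : Set V) ∧ G.Adj v u}.ncard ≤ 1 := by
    intro v hv
    by_contra hbig
    push_neg at hbig
    have hset : {u : V | u ∈ (T : Set V) ∧ G.Adj v u} = ↑(T.filter (fun u => G.Adj v u)) := by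
      ext u; simp
    rw [hset, Set.ncard_coe_finset] at hbig
    obtain ⟨u₁, hu₁, u₂, hu₂, hne⟩ := Finset.one_lt_card.mp hbig
    simp only [Finset.mem_filter] at hu₁ hu₂
    have hvT : v ∉ T := by simpa using hv
    -- T is nonempty and T.card < 4*t
    have hTlt : T.card < 4 * t := by
      rcases lt_or_eq_of_le hTcard with h | h
      · exact h
      · exfalso
        have := havg T ⟨u₁, hu₁.1⟩ hTcard
        rw [hedset] at this
        omega
    -- two new edges
    have he₁ : s(v, u₁) ∈ G.edgeFinset := by
      rw [SimpleGraph.mem_edgeFinset]; exact hu₁.2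
    have he₂ : s(v, u₂) ∈ G.edgeFinset := by
      rw [SimpleGraph.mem_edgeFinset]; exact hu₂.2
    set T' := insert v T with hT'
    have hedge_sub : insert s(v, u₁) (insert s(v, u₂)
        (G.edgeFinset.filter (fun e => ∀ x ∈ e, x ∈ T)))
        ⊆ G.edgeFinset.filter (fun e => ∀ x ∈ e, x ∈ T') := by
      intro e he
      simp only [Finset.mem_insert] at he
      rcases he with rfl | rfl | he
      · simp only [Finset.mem_filter]
        refine ⟨he₁, ?_⟩
        intro x hx
        rw [Sym2.mem_iff] at hx
        rcases hx with rfl | rfl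
        · exact Finset.mem_insert_self _ _
        · exact Finset.mem_insert_of_mem hu₁.1
      · simp only [Finset.mem_filter]
        refine ⟨he₂, ?_⟩
        intro x hx
        rw [Sym2.mem_iff] at hx
        rcases hx with rfl | rfl
        · exact Finset.mem_insert_self _ _
        · exact Finset.mem_insert_of_mem hu₂.1
      · simp only [Finset.mem_filter] at he ⊢
        exact ⟨he.1, fun x hx => Finset.mem_insert_of_mem (he.2 x hx)⟩
    have hn₁ : s(v, u₁) ∉ insert s(v, u₂) (G.edgeFinset.filter (fun e => ∀ x ∈ e, x ∈ T)) := by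
      simp only [Finset.mem_insert, Finset.mem_filter]
      rintro (h | ⟨-, hall⟩)
      · rw [Sym2.eq_iff] at h
        rcases h with ⟨-, h⟩ | ⟨h, -⟩
        · exact hne (h ▸ rfl)
        · exact hvT (h ▸ hu₂.1)
      · exact hvT (hall v (Sym2.mem_mk_left v u₁))
    have hn₂ : s(v, u₂) ∉ G.edgeFinset.filter (fun e => ∀ x ∈ e, x ∈ T) := by
      simp only [Finset.mem_filter]
      rintro ⟨-, hall⟩
      exact hvT (hall v (Sym2.mem_mk_left v u₂))
    have hedT' : ed T + 2 ≤ ed T' := by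
      have := Finset.card_le_card hedge_sub
      rw [Finset.card_insert_of_notMem hn₁, Finset.card_insert_of_notMem hn₂] at this
      simp only [hed] at this ⊢
      omega
    have hT'card : T'.card = T.card + 1 := Finset.card_insert_of_notMem hvT
    have hT'mem : T' ∈ 𝒯 := by
      simp only [h𝒯, Finset.mem_filter, Finset.mem_univ, true_and]
      refine ⟨hST.trans (Finset.subset_insert _ _), by omega, by omega⟩
    have := hTmax T' hT'mem
    omega
  -- conclude
  have hsub : closureF G (S : Set V) ⊆ (T : Set V) :=
    Set.sInter_subset_of_mem ⟨by exact_mod_cast hST, hclosed⟩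
  calc (closureF G (S : Set V)).ncard ≤ (T : Set V).ncard :=
        Set.ncard_le_ncard hsub (T : Set V).toFinite
    _ = T.card := Set.ncard_coe_finset T
    _ ≤ 4 * t := hTcard
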